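/- Let k ≥ 3 be an integer and let (a_i)_{i∈ℕ} be a strictly decreasing infinite sequence of positive real numbers such that G = ⋃_{i=1}^{∞} (a_{2i}, a_{2i−1}] is a k-good set and Bad(G) = ⋃_{i=1}^{∞} (a_{2i+1}, a_{2i}]. If there are positive integers A_1 and A_2 with a_1 = 1/A_1 and a_2 = 1/A_2, then there exists a strictly increasing infinite sequence (A_i)_{i∈ℕ} of positive integers such that a_i = 1/A_i for all i ∈ ℕ; moreover, lim_{i→∞} a_i = 0. -/

import Mathlib

/-- A set `G` of reals is `k`-good if it contains no geometric progression of
length `k` with integer ratio. -/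
def kGood (k : ℕ) (G : Set ℝ) : Prop :=
  ¬ ∃ (a : ℝ) (r : ℕ), 0 < a ∧ 2 ≤ r ∧ ∀ j < k, a * (r : ℝ) ^ j ∈ G

/-- `x` is `k`-bad with respect to `G` if there is an integer `r ≥ 2` with
`x * r ^ j ∈ G` for all `j ∈ {1,...,k-1}`. -/
def kBadWrt (k : ℕ) (G : Set ℝ) (x : ℝ) : Prop :=
  ∃ r : ℕ, 2 ≤ r ∧ ∀ j : ℕ, 1 ≤ j → j ≤ k - 1 → x * (r : ℝ) ^ j ∈ G

/-- `Bad k G` is the set of `x ∈ (0,1] \ G` that are `k`-bad with respect to `G`. -/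
def Bad (k : ℕ) (G : Set ℝ) : Set ℝ :=
  {x | x ∈ Set.Ioc (0 : ℝ) 1 \ G ∧ kBadWrt k G x}

open Set Filter Topology

private lemma gsub (a : ℕ → ℝ) (hpos : ∀ i, 0 < a i) (hdec : StrictAnti a)
    {x : ℝ} (hx : x ∈ ⋃ i : ℕ, Set.Ioc (a (2 * i + 1)) (a (2 * i))) :
    x ∈ Set.Ioc 0 (a 0) := by
  obtain ⟨i, hi⟩ := mem_iUnion.1 hx
  exact ⟨(hpos _).trans hi.1, hi.2.trans (hdec.antitone (Nat.zero_le _))⟩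

private lemma gapA (a : ℕ → ℝ) (hpos : ∀ i, 0 < a i) (hdec : StrictAnti a)
    (t : ℝ) (hex : ∃ n, a n < t)
    (H : ∀ ε : ℝ, 0 < ε → ∃ s ∈ (⋃ i : ℕ, Set.Ioc (a (2 * i + 1)) (a (2 * i))),
      t < s ∧ s < t + ε) :
    t ∈ (⋃ i : ℕ, Set.Ioc (a (2 * i + 1)) (a (2 * i))) ∨ ∃ m, t = a (2 * m + 1) := by
  have ht0 : t < a 0 := by
    obtain ⟨s, hsG, hts, _⟩ := H 1 one_pos
    exact lt_of_lt_of_le hts (gsub a hpos hdec hsG).2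
  have hexm : ∃ m, a (2 * m + 1) < t := by
    obtain ⟨n, hn⟩ := hex
    exact ⟨n, lt_of_le_of_lt (hdec.antitone (by omega)) hn⟩
  have h₀ : a (2 * Nat.find hexm + 1) < t := Nat.find_spec hexm
  by_cases hle : t ≤ a (2 * Nat.find hexm)
  · exact Or.inl (mem_iUnion.2 ⟨Nat.find hexm, h₀, hle⟩)
  · push_neg at hle
    have hm0 : Nat.find hexm ≠ 0 := by
      intro h
      rw [h] at hle
      norm_num at hle
      linarith
    obtain ⟨m₁, hm₁⟩ : ∃ m₁, Nat.find hexm = m₁ + 1 := ⟨Nat.find hexm - 1, by omega⟩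
    have hmin : ¬ a (2 * m₁ + 1) < t := Nat.find_min hexm (by omega)
    push_neg at hmin
    rcases eq_or_lt_of_le hmin with heq | hlt
    · exact Or.inr ⟨m₁, heq⟩
    · exfalso
      obtain ⟨s, hsG, hts, hs2⟩ := H (a (2 * m₁ + 1) - t) (by linarith)
      obtain ⟨m, hm⟩ := mem_iUnion.1 hsG
      rw [hm₁] at hle
      have h5 : a (2 * (m₁ + 1)) < a (2 * m) := by linarith [hm.2]
      have h6 : 2 * m < 2 * (m₁ + 1) := hdec.lt_iff_gt.1 h5
      have h7 : a (2 * m₁ + 1) ≤ a (2 * m + 1) := hdec.antitone (by omega)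
      linarith [hm.1]
private lemma evenStep (k : ℕ) (hk : 3 ≤ k) (a : ℕ → ℝ)
    (hpos : ∀ i, 0 < a i) (hdec : StrictAnti a)
    (hgood : kGood k (⋃ i : ℕ, Set.Ioc (a (2 * i + 1)) (a (2 * i))))
    (hbad : Bad k (⋃ i : ℕ, Set.Ioc (a (2 * i + 1)) (a (2 * i))) =
      ⋃ i : ℕ, Set.Ioc (a (2 * i + 2)) (a (2 * i + 1)))
    (i : ℕ) :
    ∃ m r j : ℕ, m < 2 * i + 2 ∧ 2 ≤ r ∧ 1 ≤ j ∧ a (2 * i + 2) = a m / (r : ℝ) ^ j := by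
  set G := ⋃ i : ℕ, Set.Ioc (a (2 * i + 1)) (a (2 * i)) with hG
  set b := a (2 * i + 2) with hbdef
  set c := a (2 * i + 1) with hcdef
  have hbc : b < c := hdec (by omega)
  have hb0 : 0 < b := hpos _
  have hBad : ∀ x ∈ Set.Ioc b c, kBadWrt k G x := by
    intro x hx
    have : x ∈ Bad k G := by rw [hbad]; exact mem_iUnion.2 ⟨i, hx⟩
    exact this.2
  set R := ⌈a 0 / b⌉₊ with hR
  have hrb : ∀ x ∈ Set.Ioc b c, ∀ r : ℕ, 2 ≤ r →
      (∀ j : ℕ, 1 ≤ j → j ≤ k - 1 → x * (r : ℝ) ^ j ∈ G) → r ≤ R := by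
    intro x hx r hr2 hmem
    have h1 : x * (r : ℝ) ^ 1 ∈ G := hmem 1 le_rfl (by omega)
    have h2 := (gsub a hpos hdec h1).2
    rw [pow_one] at h2
    have hxb : b < x := hx.1
    have hr0 : (0 : ℝ) ≤ (r : ℝ) := by positivity
    have h3 : (r : ℝ) ≤ a 0 / b := by
      rw [le_div_iff₀ hb0]
      nlinarith
    have h4 : (r : ℝ) ≤ (R : ℝ) := h3.trans (Nat.le_ceil _)
    exact_mod_cast h4
  have hfreq : ∃ r : ℕ, 2 ≤ r ∧
      ∃ᶠ x in 𝓝[>] b, ∀ j : ℕ, 1 ≤ j → j ≤ k - 1 → x * (r : ℝ) ^ j ∈ G := by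
    by_contra hcon
    push_neg at hcon
    have hev : ∀ᶠ x in 𝓝[>] b, ∀ r ∈ Finset.Icc 2 R,
        ¬ (∀ j : ℕ, 1 ≤ j → j ≤ k - 1 → x * (r : ℝ) ^ j ∈ G) := by
      rw [Filter.eventually_all_finset]
      intro r hr
      have := hcon r (Finset.mem_Icc.1 hr).1
      exact this.mono fun x hx => by push_neg; exact hx
    have hmem : Set.Ioc b c ∈ 𝓝[>] b := Ioc_mem_nhdsGT_of_mem ⟨le_refl b, hbc⟩
    have hfalse : ∀ᶠ x in 𝓝[>] b, False := by
      filter_upwards [hev, Filter.eventually_mem_set.2 hmem] with x h1 h2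
      obtain ⟨r, hr2, hrm⟩ := hBad x h2
      exact h1 r (Finset.mem_Icc.2 ⟨hr2, hrb x h2 r hr2 hrm⟩) hrm
    obtain ⟨x, hx⟩ := hfalse.exists
    exact hx
  obtain ⟨r, hr2, hfr⟩ := hfreq
  have hr2' : (2 : ℝ) ≤ (r : ℝ) := by exact_mod_cast hr2
  have hgap : ∀ j : ℕ, 1 ≤ j → j ≤ k - 1 →
      (b * (r : ℝ) ^ j ∈ G) ∨ ∃ m, b * (r : ℝ) ^ j = a (2 * m + 1) := by
    intro j hj1 hjk
    have hrj : (2 : ℝ) ≤ (r : ℝ) ^ j := hr2'.trans (le_self_pow₀ (by linarith) (by omega))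
    have hpow : (0 : ℝ) < (r : ℝ) ^ j := by positivity
    apply gapA a hpos hdec
    · exact ⟨2 * i + 2, by nlinarith⟩
    · intro ε hε
      have hoo : Set.Ioo b (b + ε / (r : ℝ) ^ j) ∈ 𝓝[>] b :=
        Ioo_mem_nhdsGT_of_mem ⟨le_refl b, lt_add_of_pos_right b (by positivity)⟩
      obtain ⟨x, hxP, hxoo⟩ := (hfr.and_eventually (Filter.eventually_mem_set.2 hoo)).exists
      refine ⟨x * (r : ℝ) ^ j, hxP j hj1 hjk, ?_, ?_⟩
      · have h1 : b < x := hxoo.1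
        nlinarith
      · have h1 : x < b + ε / (r : ℝ) ^ j := hxoo.2
        have h2 : x * (r : ℝ) ^ j < (b + ε / (r : ℝ) ^ j) * (r : ℝ) ^ j := by nlinarith
        rwa [add_mul, div_mul_cancel₀ _ (ne_of_gt hpow)] at h2
  by_cases hall : ∀ j : ℕ, 1 ≤ j → j ≤ k - 1 → b * (r : ℝ) ^ j ∈ G
  · exfalso
    apply hgood
    refine ⟨b, r, hb0, hr2, ?_⟩
    intro j hj
    rcases Nat.eq_zero_or_pos j with h0 | h1
    · subst h0
      rw [pow_zero, mul_one]
      have e1 : 2 * (i + 1) = 2 * i + 2 := by ring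
      have e2 : 2 * (i + 1) + 1 = 2 * i + 3 := by ring
      refine mem_iUnion.2 ⟨i + 1, ?_, ?_⟩
      · rw [e2]; exact hdec (by omega)
      · rw [e1]
    · exact hall j h1 (by omega)
  · push_neg at hall
    obtain ⟨j, hj1, hjk, hnot⟩ := hall
    rcases hgap j hj1 hjk with hmem | ⟨m, heq⟩
    · exact absurd hmem hnot
    · have hrj : (2 : ℝ) ≤ (r : ℝ) ^ j := hr2'.trans (le_self_pow₀ (by linarith) (by omega))
      have hpow : (0 : ℝ) < (r : ℝ) ^ j := by positivity
      refine ⟨2 * m + 1, r, j, ?_, hr2, hj1, ?_⟩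
      · have hlt : a (2 * i + 2) < a (2 * m + 1) := by rw [← heq, ← hbdef]; nlinarith
        exact hdec.lt_iff_gt.1 hlt
      · rw [← heq, mul_div_cancel_right₀ _ (ne_of_gt hpow)]
private lemma oddStep (k : ℕ) (hk : 3 ≤ k) (a : ℕ → ℝ)
    (hpos : ∀ i, 0 < a i) (hdec : StrictAnti a)
    (hgood : kGood k (⋃ i : ℕ, Set.Ioc (a (2 * i + 1)) (a (2 * i))))
    (hbad : Bad k (⋃ i : ℕ, Set.Ioc (a (2 * i + 1)) (a (2 * i))) =
      ⋃ i : ℕ, Set.Ioc (a (2 * i + 2)) (a (2 * i + 1)))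
    (i : ℕ) :
    ∃ m r j : ℕ, m < 2 * i + 3 ∧ 2 ≤ r ∧ 1 ≤ j ∧ a (2 * i + 3) = a m / (r : ℝ) ^ j := by
  set G := ⋃ i : ℕ, Set.Ioc (a (2 * i + 1)) (a (2 * i)) with hG
  set c := a (2 * i + 3) with hcdef
  have hc0 : 0 < c := hpos _
  have hcBad : c ∈ Bad k G := by
    rw [hbad]
    refine mem_iUnion.2 ⟨i + 1, ?_, ?_⟩
    · show a (2 * (i + 1) + 2) < c
      exact hdec (by omega)
    · show c ≤ a (2 * (i + 1) + 1)
      rw [hcdef]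
      exact le_of_eq (by norm_num [show 2 * (i + 1) + 1 = 2 * i + 3 by ring])
  obtain ⟨-, r, hr2, hmem⟩ := hcBad
  have hr2' : (2 : ℝ) ≤ (r : ℝ) := by exact_mod_cast hr2
  have hchoose : ∀ j : ℕ, ∃ m : ℕ, 1 ≤ j → j ≤ k - 1 →
      c * (r : ℝ) ^ j ∈ Set.Ioc (a (2 * m + 1)) (a (2 * m)) := by
    intro j
    by_cases h : 1 ≤ j ∧ j ≤ k - 1
    · obtain ⟨m, hm⟩ := mem_iUnion.1 (hmem j h.1 h.2)
      exact ⟨m, fun _ _ => hm⟩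
    · exact ⟨0, fun h1 h2 => absurd ⟨h1, h2⟩ h⟩
  choose m hm using hchoose
  by_cases hex : ∃ j : ℕ, 1 ≤ j ∧ j ≤ k - 1 ∧ c * (r : ℝ) ^ j = a (2 * m j)
  · obtain ⟨j, hj1, hjk, heq⟩ := hex
    have hrj : (2 : ℝ) ≤ (r : ℝ) ^ j := hr2'.trans (le_self_pow₀ (by linarith) (by omega))
    have hpow : (0 : ℝ) < (r : ℝ) ^ j := by positivity
    refine ⟨2 * m j, r, j, ?_, hr2, hj1, ?_⟩
    · have hlt : a (2 * i + 3) < a (2 * m j) := by rw [← heq, ← hcdef]; nlinarith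
      exact hdec.lt_iff_gt.1 hlt
    · rw [← heq, mul_div_cancel_right₀ _ (ne_of_gt hpow)]
  · push_neg at hex
    exfalso
    apply hgood
    have hne : (Finset.Icc 1 (k - 1)).Nonempty := ⟨1, Finset.mem_Icc.2 ⟨le_rfl, by omega⟩⟩
    set x := min (a (2 * i + 2))
      ((Finset.Icc 1 (k - 1)).inf' hne (fun j => a (2 * m j) / (r : ℝ) ^ j)) with hx
    have hcx : c < x := by
      apply lt_min
      · exact hdec (by omega)
      · rw [Finset.lt_inf'_iff]
        intro j hj
        obtain ⟨hj1, hjk⟩ := Finset.mem_Icc.1 hj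
        have hpow : (0 : ℝ) < (r : ℝ) ^ j := by positivity
        have hlt : c * (r : ℝ) ^ j < a (2 * m j) :=
          lt_of_le_of_ne (hm j hj1 hjk).2 (hex j hj1 hjk)
        rw [lt_div_iff₀ hpow]
        exact hlt
    refine ⟨x, r, lt_trans hc0 hcx, hr2, ?_⟩
    intro j hj
    rcases Nat.eq_zero_or_pos j with h0 | hj1
    · subst h0
      rw [pow_zero, mul_one]
      refine mem_iUnion.2 ⟨i + 1, ?_, ?_⟩
      · show a (2 * (i + 1) + 1) < x
        rw [show 2 * (i + 1) + 1 = 2 * i + 3 by ring]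
        exact hcx
      · show x ≤ a (2 * (i + 1))
        rw [show 2 * (i + 1) = 2 * i + 2 by ring]
        exact min_le_left _ _
    · have hjk : j ≤ k - 1 := by omega
      have h1 := hm j hj1 hjk
      have hpow : (0 : ℝ) < (r : ℝ) ^ j := by positivity
      refine mem_iUnion.2 ⟨m j, ?_, ?_⟩
      · calc a (2 * m j + 1) < c * (r : ℝ) ^ j := h1.1
          _ < x * (r : ℝ) ^ j := by nlinarith
      · have h2 : x ≤ a (2 * m j) / (r : ℝ) ^ j :=
          (min_le_right _ _).trans (Finset.inf'_le _ (Finset.mem_Icc.2 ⟨hj1, hjk⟩))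
        rwa [le_div_iff₀ hpow] at h2
/-- Here `a i` denotes the term `a_{i+1}` of the paper, so that
`G = ⋃_{i ≥ 1} (a_{2i}, a_{2i-1}]` and `Bad G = ⋃_{i ≥ 1} (a_{2i+1}, a_{2i}]`. -/
theorem stmt_10 (k : ℕ) (hk : 3 ≤ k) (a : ℕ → ℝ)
    (hpos : ∀ i, 0 < a i) (hdec : StrictAnti a)
    (hgood : kGood k (⋃ i : ℕ, Set.Ioc (a (2 * i + 1)) (a (2 * i))))
    (hbad : Bad k (⋃ i : ℕ, Set.Ioc (a (2 * i + 1)) (a (2 * i))) =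
      ⋃ i : ℕ, Set.Ioc (a (2 * i + 2)) (a (2 * i + 1)))
    (A₁ A₂ : ℕ) (hA₁ : 0 < A₁) (hA₂ : 0 < A₂)
    (ha1 : a 0 = 1 / (A₁ : ℝ)) (ha2 : a 1 = 1 / (A₂ : ℝ)) :
    (∃ A : ℕ → ℕ, (∀ i, 0 < A i) ∧ StrictMono A ∧
      ∀ i, a i = 1 / (A i : ℝ)) ∧
    Filter.Tendsto a Filter.atTop (nhds 0) := by
  have key : ∀ n : ℕ, 2 ≤ n →
      ∃ m r j : ℕ, m < n ∧ 2 ≤ r ∧ 1 ≤ j ∧ a n = a m / (r : ℝ) ^ j := by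
    intro n hn
    rcases Nat.even_or_odd n with he | ho
    · obtain ⟨t, ht⟩ := he
      obtain ⟨i, rfl⟩ : ∃ i, n = 2 * i + 2 := ⟨t - 1, by omega⟩
      exact evenStep k hk a hpos hdec hgood hbad i
    · obtain ⟨t, ht⟩ := ho
      obtain ⟨i, rfl⟩ : ∃ i, n = 2 * i + 3 := ⟨t - 1, by omega⟩
      exact oddStep k hk a hpos hdec hgood hbad i
  have hQ : ∀ n : ℕ, ∃ N : ℕ, 0 < N ∧ a n = 1 / (N : ℝ) := by
    intro n
    induction n using Nat.strong_induction_on with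
    | _ n ih =>
      rcases Nat.lt_or_ge n 2 with h2 | h2
      · interval_cases n
        · exact ⟨A₁, hA₁, ha1⟩
        · exact ⟨A₂, hA₂, ha2⟩
      · obtain ⟨m, r, j, hmn, hr2, hj1, heq⟩ := key n h2
        obtain ⟨N, hN, haN⟩ := ih m hmn
        refine ⟨N * r ^ j, Nat.mul_pos hN (Nat.pow_pos (by omega)), ?_⟩
        rw [heq, haN, div_div]
        push_cast
        ring
  choose A hA0 hAe using hQ
  have hmono : StrictMono A := by
    intro p q hpq
    have h1 : a q < a p := hdec hpq
    rw [hAe p, hAe q] at h1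
    have hp0 : (0 : ℝ) < (A q : ℝ) := by exact_mod_cast hA0 q
    have h2 : (A p : ℝ) < (A q : ℝ) := lt_of_one_div_lt_one_div hp0 h1
    exact_mod_cast h2
  refine ⟨⟨A, hA0, hmono, hAe⟩, ?_⟩
  have h1 : Filter.Tendsto (fun n => (A n : ℝ)) Filter.atTop Filter.atTop :=
    tendsto_natCast_atTop_atTop.comp hmono.tendsto_atTop
  have h2 : Filter.Tendsto (fun n => 1 / (A n : ℝ)) Filter.atTop (nhds 0) := by
    exact h1.inv_tendsto_atTop.congr fun n => by simp [one_div]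
  exact h2.congr fun n => (hAe n).symm
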